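/- Let D be a (v,k,λ)-difference set in a finite abelian group G, and suppose that |Dg ∩ (Dg)^(−1)| = λ for every g ∈ G. Then this leads to a contradiction; hence some translate of D satisfies |Dg ∩ (Dg)^(−1)| > λ. -/

import Mathlib

def IsDiffSet {G : Type*} [Group G] [Fintype G] [DecidableEq G]
    (v k l : ℕ) (D : Finset G) : Prop :=
  Fintype.card G = v ∧ D.card = k ∧
    ∀ g : G, g ≠ 1 → ((D ×ˢ D).filter (fun p => p.1 * p.2⁻¹ = g)).card = l

section Aux

variable {G : Type*} [CommGroup G] [Fintype G] [DecidableEq G]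

/-- number of square roots of `c` -/
def sqr (c : G) : ℕ := (Finset.univ.filter fun g : G => g * g = c).card

lemma sum_sqr : ∑ c : G, sqr c = Fintype.card G := by
  rw [← Finset.card_univ]
  exact (Finset.card_eq_sum_card_fiberwise
    (fun g _ => Finset.mem_univ (g * g))).symm

lemma sqr_one_pos : 0 < sqr (1 : G) := by
  apply Finset.card_pos.mpr
  exact ⟨1, by simp⟩

lemma sqr_shift (d₁ d₂ : G) : sqr ((d₁ * d₂)⁻¹) = sqr (d₁ * d₂⁻¹) := by
  refine Finset.card_bij' (fun g _ => (g * d₂)⁻¹) (fun h _ => h⁻¹ * d₂⁻¹) ?_ ?_ ?_ ?_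
  · intro g hg
    simp only [Finset.mem_filter, Finset.mem_univ, true_and] at hg ⊢
    have : (g * d₂)⁻¹ * (g * d₂)⁻¹ = (g * g)⁻¹ * (d₂⁻¹ * d₂⁻¹) := by
      simp [mul_inv_rev, mul_comm, mul_left_comm, mul_assoc, mul_inv_cancel_left, inv_mul_cancel_left]
    rw [this, hg]
    simp [mul_inv_rev, mul_comm, mul_left_comm, mul_assoc, mul_inv_cancel_left, inv_mul_cancel_left]
  · intro h hh
    simp only [Finset.mem_filter, Finset.mem_univ, true_and] at hh ⊢
    have : h⁻¹ * d₂⁻¹ * (h⁻¹ * d₂⁻¹) = (h * h)⁻¹ * (d₂⁻¹ * d₂⁻¹) := by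
      simp [mul_inv_rev, mul_comm, mul_left_comm, mul_assoc, mul_inv_cancel_left, inv_mul_cancel_left]
    rw [this, hh]
    simp [mul_inv_rev, mul_comm, mul_left_comm, mul_assoc, mul_inv_cancel_left, inv_mul_cancel_left]
    rw [mul_left_comm, mul_inv_cancel_left]
  · intro g _
    simp [mul_inv_rev, mul_comm, mul_left_comm, mul_assoc, mul_inv_cancel_left, inv_mul_cancel_left]
  · intro h _
    simp [mul_inv_rev, mul_comm, mul_left_comm, mul_assoc, mul_inv_cancel_left, inv_mul_cancel_left]

lemma diag_card (D : Finset G) :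
    ((D ×ˢ D).filter fun p => p.1 * p.2⁻¹ = 1).card = D.card := by
  refine Finset.card_bij' (fun p _ => p.1) (fun d _ => (d, d)) ?_ ?_ ?_ ?_
  · intro p hp
    simp only [Finset.mem_filter, Finset.mem_product] at hp
    exact hp.1.1
  · intro d hd
    simp only [Finset.mem_filter, Finset.mem_product]
    exact ⟨⟨hd, hd⟩, mul_inv_cancel _⟩
  · intro p hp
    simp only [Finset.mem_filter, Finset.mem_product] at hp
    have h := hp.2
    rw [mul_inv_eq_one] at h
    exact Prod.ext rfl h
  · intro d _; rfl

end Aux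

/-- It is impossible that `|Dg ∩ (Dg)⁽⁻¹⁾| = λ` for every `g`; hence some translate
satisfies `|Dg ∩ (Dg)⁽⁻¹⁾| > λ`. -/
theorem stmt9 {G : Type*} [CommGroup G] [Fintype G] [DecidableEq G]
    (v k l : ℕ) (D : Finset G) (hD : IsDiffSet v k l D) (hkl : l < k) :
    (¬ ∀ g : G,
        ((D.image (fun d => d * g)) ∩
          ((D.image (fun d => d * g)).image (fun x => x⁻¹))).card = l) ∧
    ∃ g : G, l <
        ((D.image (fun d => d * g)) ∩
          ((D.image (fun d => d * g)).image (fun x => x⁻¹))).card := by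
  obtain ⟨hv, hk, hl⟩ := hD
  -- Step A: rewrite each intersection cardinality
  have hN : ∀ g : G,
      ((D.image (fun d => d * g)) ∩
        ((D.image (fun d => d * g)).image (fun x => x⁻¹))).card
      = (D.filter fun d => d⁻¹ * g⁻¹ * g⁻¹ ∈ D).card := by
    intro g
    have hset : (D.image (fun d => d * g)) ∩
        ((D.image (fun d => d * g)).image (fun x => x⁻¹))
        = (D.filter fun d => d⁻¹ * g⁻¹ * g⁻¹ ∈ D).image (fun d => d * g) := by
      ext x
      simp only [Finset.mem_inter, Finset.mem_image, Finset.mem_filter]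
      constructor
      · rintro ⟨⟨d₁, hd₁, rfl⟩, ⟨y, ⟨d₂, hd₂, rfl⟩, hy⟩⟩
        refine ⟨d₁, ⟨hd₁, ?_⟩, rfl⟩
        have hd : d₂ = d₁⁻¹ * g⁻¹ * g⁻¹ := by
          have h1 : d₂ * g = (d₁ * g)⁻¹ := by rw [← hy, inv_inv]
          have h2 : d₂ = (d₁ * g)⁻¹ * g⁻¹ := by rw [← h1]; group
          rw [h2]
          simp [mul_inv_rev, mul_comm, mul_left_comm, mul_assoc, mul_inv_cancel_left, inv_mul_cancel_left]
        rw [← hd]; exact hd₂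
      · rintro ⟨d, ⟨hd, hd'⟩, rfl⟩
        refine ⟨⟨d, hd, rfl⟩, ⟨(d * g)⁻¹, ⟨d⁻¹ * g⁻¹ * g⁻¹, hd', ?_⟩, by group⟩⟩
        simp [mul_inv_rev, mul_comm, mul_left_comm, mul_assoc, mul_inv_cancel_left, inv_mul_cancel_left]
    rw [hset, Finset.card_image_of_injective _ (mul_left_injective g)]
  -- Step B: the global sum identity
  have key : ∑ g : G, (D.filter fun d => d⁻¹ * g⁻¹ * g⁻¹ ∈ D).card
      = ∑ h : G, ((D ×ˢ D).filter fun p => p.1 * p.2⁻¹ = h).card * sqr h := by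
    have step1 : ∑ g : G, (D.filter fun d => d⁻¹ * g⁻¹ * g⁻¹ ∈ D).card
        = ∑ d ∈ D, (Finset.univ.filter fun g : G => d⁻¹ * g⁻¹ * g⁻¹ ∈ D).card := by
      simp only [Finset.card_filter]
      rw [Finset.sum_comm]
    have step2 : ∀ d₁ ∈ D,
        (Finset.univ.filter fun g : G => d₁⁻¹ * g⁻¹ * g⁻¹ ∈ D).card
        = ∑ d₂ ∈ D, sqr (d₁ * d₂⁻¹) := by
      intro d₁ _
      rw [Finset.card_eq_sum_card_fiberwise
        (f := fun g : G => d₁⁻¹ * g⁻¹ * g⁻¹) (t := D)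
        (s := Finset.univ.filter fun g : G => d₁⁻¹ * g⁻¹ * g⁻¹ ∈ D)
        (fun g hg => (Finset.mem_filter.mp hg).2)]
      apply Finset.sum_congr rfl
      intro d₂ hd₂
      rw [← sqr_shift d₁ d₂]
      unfold sqr
      congr 1
      rw [Finset.filter_filter]
      ext g
      simp only [Finset.mem_filter, Finset.mem_univ, true_and]
      constructor
      · rintro ⟨_, h2⟩
        rw [← h2]
        simp [mul_inv_rev, mul_comm, mul_left_comm, mul_assoc, mul_inv_cancel_left, inv_mul_cancel_left]
      · intro h
        have h2 : d₁⁻¹ * g⁻¹ * g⁻¹ = d₂ := by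
          have h3 : d₁⁻¹ * g⁻¹ * g⁻¹ = d₁⁻¹ * (g * g)⁻¹ := by
            simp [mul_inv_rev, mul_comm, mul_left_comm, mul_assoc, mul_inv_cancel_left, inv_mul_cancel_left]
          rw [h3, h]
          simp [mul_inv_rev, mul_comm, mul_left_comm, mul_assoc, mul_inv_cancel_left, inv_mul_cancel_left]
        exact ⟨by rw [h2]; exact hd₂, h2⟩
    have step4 : ∑ p ∈ D ×ˢ D, sqr (p.1 * p.2⁻¹)
        = ∑ h : G, ((D ×ˢ D).filter fun p => p.1 * p.2⁻¹ = h).card * sqr h := by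
      rw [← Finset.sum_fiberwise' (D ×ˢ D) (fun p => p.1 * p.2⁻¹) (fun h => sqr h)]
      apply Finset.sum_congr rfl
      intro h _
      rw [Finset.sum_const, smul_eq_mul]
    rw [step1, Finset.sum_congr rfl step2, ← Finset.sum_product', step4]
  -- evaluate the RHS
  have hsplit : ∑ h : G, ((D ×ˢ D).filter fun p => p.1 * p.2⁻¹ = h).card * sqr h
      + l * sqr (1:G) = k * sqr (1:G) + l * v := by
    rw [← Finset.add_sum_erase _ _ (Finset.mem_univ (1 : G))]
    have h1 : ((D ×ˢ D).filter fun p => p.1 * p.2⁻¹ = (1:G)).card * sqr (1:G)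
        = k * sqr (1:G) := by
      rw [diag_card, hk]
    have h2 : ∑ h ∈ Finset.univ.erase (1:G),
        ((D ×ˢ D).filter fun p => p.1 * p.2⁻¹ = h).card * sqr h
        = l * ∑ h ∈ Finset.univ.erase (1:G), sqr h := by
      rw [Finset.mul_sum]
      apply Finset.sum_congr rfl
      intro h hh
      rw [hl h (Finset.ne_of_mem_erase hh)]
    have h3 : sqr (1:G) + ∑ h ∈ Finset.univ.erase (1:G), sqr h = v := by
      rw [Finset.add_sum_erase _ _ (Finset.mem_univ (1 : G)), sum_sqr, hv]
    rw [h1, h2, ← h3]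
    ring
  have ht : 0 < sqr (1 : G) := sqr_one_pos
  -- conclude: the total sum exceeds l * v
  have hlt : ∑ g : G, l < ∑ g : G, ((D.image (fun d => d * g)) ∩
          ((D.image (fun d => d * g)).image (fun x => x⁻¹))).card := by
    have e1 : ∑ g : G, ((D.image (fun d => d * g)) ∩
          ((D.image (fun d => d * g)).image (fun x => x⁻¹))).card
        + l * sqr (1:G) = k * sqr (1:G) + l * v := by
      rw [Finset.sum_congr rfl (fun g _ => hN g), key]; exact hsplit
    have e2 : ∑ g : G, l = l * v := by
      rw [Finset.sum_const, Finset.card_univ, hv, smul_eq_mul, Nat.mul_comm]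
    have e3 : l * sqr (1:G) + sqr (1:G) ≤ k * sqr (1:G) := by
      calc l * sqr (1:G) + sqr (1:G) = (l + 1) * sqr (1:G) := by ring
      _ ≤ k * sqr (1:G) := Nat.mul_le_mul_right _ hkl
    omega
  obtain ⟨g, _, hg⟩ := Finset.exists_lt_of_sum_lt hlt
  refine ⟨fun hall => ?_, ⟨g, hg⟩⟩
  rw [hall g] at hg
  exact lt_irrefl _ hg
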